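/- For real q > 1, s > 0 and t > 0, ∑_{n=0}^∞ ∫₀¹ (q^{n+x+t} - 1)^{-s} dx = (q^t-1)^{1-s}/(s q^t log q) · ₂F₁(1,1;s+1;q^{-t}); equivalently, with [y]_q = (q^y - 1)/(q-1), ∫₀¹ ∑_{n=0}^∞ [n+x+t]_q^{-s} dx = ((q-1)^s/(s log q)) (q^t-1)^{1-s} q^{-t} ₂F₁(1,1;s+1;q^{-t}). -/

import Mathlib

/-- The Pochhammer symbol `(a)_k = a(a+1)⋯(a+k-1)` for real `a`. -/
noncomputable def poch (a : ℝ) (k : ℕ) : ℝ := ∏ j ∈ Finset.range k, (a + j)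

/-- The hypergeometric series `₂F₁(1,1;c;z) = ∑_{k=0}^∞ (k!/(c)_k) z^k`. -/
noncomputable def F211 (c z : ℝ) : ℝ := ∑' k : ℕ, (Nat.factorial k : ℝ) / poch c k * z ^ k

/-- The `q`-analogue `[y]_q = (q^y - 1)/(q - 1)`. -/
noncomputable def qAnalog (q y : ℝ) : ℝ := (q ^ y - 1) / (q - 1)


open MeasureTheory Set Real

lemma poch_pos {a : ℝ} (ha : 0 < a) (k : ℕ) : 0 < poch a k := by
  unfold poch
  exact Finset.prod_pos fun j _ => by positivity

lemma poch_succ (a : ℝ) (k : ℕ) : poch a (k + 1) = poch a k * (a + k) :=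
  Finset.prod_range_succ _ _

lemma poch_succ' (a : ℝ) (k : ℕ) : poch a (k + 1) = a * poch (a + 1) k := by
  unfold poch
  rw [Finset.prod_range_succ']
  simp only [Nat.cast_zero, add_zero, Nat.cast_add, Nat.cast_one]
  rw [mul_comm]
  congr 1
  exact Finset.prod_congr rfl fun j _ => by push_cast; ring

lemma factorial_le_poch {a : ℝ} (ha : 0 < a) (k : ℕ) :
    (Nat.factorial k : ℝ) ≤ poch (a + 1) k := by
  induction k with
  | zero => simp [poch]
  | succ n ih =>
      rw [poch_succ, Nat.factorial_succ]
      push_cast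
      have h1 : (0:ℝ) < poch (a+1) n := poch_pos (by linarith) n
      have h2 : (n:ℝ) + 1 ≤ a + 1 + n := by linarith
      calc ((n:ℝ)+1) * n.factorial ≤ (a+1+n) * poch (a+1) n := by
            apply mul_le_mul h2 ih (by positivity) (by linarith)
        _ = poch (a+1) n * (a+1+n) := mul_comm _ _

lemma integrableOn_rpow_mul_pow {s : ℝ} (hs : 0 < s) (k : ℕ) :
    IntegrableOn (fun w : ℝ => w ^ (s - 1) * (1 - w) ^ k) (Ioo (0:ℝ) 1) := by
  have hbase : IntegrableOn (fun w : ℝ => w ^ (s - 1)) (Ioo (0:ℝ) 1) :=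
    (intervalIntegral.integrableOn_Ioo_rpow_iff one_pos).2 (by linarith)
  apply Integrable.mono hbase
  · apply ContinuousOn.aestronglyMeasurable _ measurableSet_Ioo
    apply ContinuousOn.mul
    · exact fun w hw => (Real.continuousAt_rpow_const w (s-1) (Or.inl (ne_of_gt hw.1))).continuousWithinAt
    · exact (continuous_const.sub continuous_id).pow k |>.continuousOn
  · filter_upwards [ae_restrict_mem measurableSet_Ioo] with w hw
    have hw0 : 0 < w := hw.1
    have hw1 : w < 1 := hw.2
    have h1 : (0:ℝ) ≤ 1 - w := by linarith
    rw [Real.norm_eq_abs, Real.norm_eq_abs, abs_of_nonneg (by positivity),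
      abs_of_nonneg (by positivity)]
    nth_rewrite 2 [← mul_one (w ^ (s-1))]
    apply mul_le_mul_of_nonneg_left _ (by positivity)
    exact pow_le_one₀ h1 (by linarith)

lemma beta_int {s : ℝ} (hs : 0 < s) (k : ℕ) :
    ∫ w in Ioo (0:ℝ) 1, w ^ (s - 1) * (1 - w) ^ k = (Nat.factorial k : ℝ) / poch s (k + 1) := by
  induction k generalizing s hs with
  | zero =>
      simp only [pow_zero, mul_one, Nat.factorial_zero, Nat.cast_one]
      rw [← MeasureTheory.integral_Ioc_eq_integral_Ioo, ← intervalIntegral.integral_of_le zero_le_one,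
        integral_rpow (Or.inl (by linarith))]
      rw [sub_add_cancel, Real.one_rpow, Real.zero_rpow (ne_of_gt hs)]
      simp [poch]
  | succ n ih =>
      have key : ∀ w ∈ Ioo (0:ℝ) 1, w ^ (s-1) * (1-w)^(n+1)
          = w ^ (s-1) * (1-w)^n - w ^ ((s+1)-1) * (1-w)^n := by
        intro w hw
        have : w ^ ((s+1)-1) = w ^ (s-1) * w := by
          rw [show (s+1)-1 = (s-1) + 1 by ring, Real.rpow_add hw.1, Real.rpow_one]
        rw [this, pow_succ]
        ring
      rw [setIntegral_congr_fun measurableSet_Ioo key, integral_sub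
        (integrableOn_rpow_mul_pow hs n) (integrableOn_rpow_mul_pow (by linarith) n),
        ih hs, ih (by linarith)]
      have p1 : (0:ℝ) < poch (s+1) n := poch_pos (by linarith) n
      have e1 : poch s (n+1) = s * poch (s+1) n := poch_succ' s n
      have e2 : poch (s+1) (n+1) = poch (s+1) n * (s+1+n) := poch_succ (s+1) n
      have e3 : poch s (n+1+1) = s * (poch (s+1) n * (s+1+n)) := by
        rw [poch_succ' s (n+1), poch_succ (s+1) n]
      rw [e1, e2, e3, Nat.factorial_succ]
      push_cast
      field_simp
      ring

lemma expand_int {a s : ℝ} (ha : 1 < a) (hs : 0 < s) :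
    ∫ w in Ioo (0:ℝ) 1, w ^ (s - 1) / (a - 1 + w)
      = ∑' k : ℕ, (Nat.factorial k : ℝ) / poch s (k + 1) * a⁻¹ ^ (k + 1) := by
  have ha0 : (0:ℝ) < a := by linarith
  have hinv : a⁻¹ < 1 := inv_lt_one_of_one_lt₀ ha
  have hinv0 : (0:ℝ) < a⁻¹ := by positivity
  set F : ℕ → ℝ → ℝ := fun k w => w ^ (s - 1) * (1 - w) ^ k * a⁻¹ ^ (k + 1) with hF
  have hFint : ∀ k, Integrable (F k) (volume.restrict (Ioo (0:ℝ) 1)) := fun k =>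
    (integrableOn_rpow_mul_pow hs k).mul_const _
  have hJ : ∀ k, ∫ w in Ioo (0:ℝ) 1, F k w
      = (Nat.factorial k : ℝ) / poch s (k + 1) * a⁻¹ ^ (k + 1) := by
    intro k
    rw [hF]
    simp only
    rw [MeasureTheory.integral_mul_const, beta_int hs k]
  have hFnonneg : ∀ k, ∀ w ∈ Ioo (0:ℝ) 1, 0 ≤ F k w := by
    intro k w hw
    have h1 : (0:ℝ) ≤ 1 - w := by linarith [hw.2]
    have := hw.1
    positivity
  have hnorm : ∀ k, ∫ w in Ioo (0:ℝ) 1, ‖F k w‖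
      = (Nat.factorial k : ℝ) / poch s (k + 1) * a⁻¹ ^ (k + 1) := by
    intro k
    rw [← hJ k]
    apply integral_congr_ae
    filter_upwards [ae_restrict_mem measurableSet_Ioo] with w hw
    exact Real.norm_of_nonneg (hFnonneg k w hw)
  have hsum : Summable fun k => ∫ w in Ioo (0:ℝ) 1, ‖F k w‖ := by
    simp only [hnorm]
    have hgeo : Summable (fun k : ℕ => s⁻¹ * a⁻¹ * a⁻¹ ^ k) :=
      (summable_geometric_of_lt_one hinv0.le hinv).mul_left _
    apply Summable.of_nonneg_of_le (fun k => mul_nonneg (div_nonneg (Nat.cast_nonneg _)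
      (poch_pos hs (k+1)).le) (by positivity)) (fun k => ?_) hgeo
    have hle : (Nat.factorial k : ℝ) / poch s (k+1) ≤ s⁻¹ := by
      rw [div_le_iff₀ (poch_pos hs (k+1)), poch_succ']
      have h2 := factorial_le_poch hs k
      calc (Nat.factorial k : ℝ) ≤ poch (s+1) k := h2
        _ = s⁻¹ * (s * poch (s+1) k) := by field_simp
    calc (Nat.factorial k : ℝ) / poch s (k+1) * a⁻¹ ^ (k+1)
        ≤ s⁻¹ * a⁻¹ ^ (k+1) := by
          apply mul_le_mul_of_nonneg_right hle (by positivity)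
      _ = s⁻¹ * a⁻¹ * a⁻¹ ^ k := by rw [pow_succ]; ring
  simp_rw [← hJ]
  rw [integral_tsum_of_summable_integral_norm hFint hsum]
  apply setIntegral_congr_ae measurableSet_Ioo
  filter_upwards with w hw
  have hw0 := hw.1
  have hw1 := hw.2
  have h1 : (0:ℝ) ≤ 1 - w := by linarith
  have hr0 : 0 ≤ (1 - w) * a⁻¹ := by positivity
  have hr1 : (1 - w) * a⁻¹ < 1 := by
    nlinarith [mul_le_mul_of_nonneg_right (show 1 - w ≤ 1 by linarith) hinv0.le]
  have key : ∀ k, F k w = (w ^ (s-1) * a⁻¹) * ((1 - w) * a⁻¹) ^ k := by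
    intro k
    rw [hF]
    simp only
    rw [mul_pow, pow_succ]
    ring
  rw [funext key] at *
  rw [tsum_mul_left, tsum_geometric_of_lt_one hr0 hr1]
  have ha' : a ≠ 0 := ne_of_gt ha0
  have h2 : (1 : ℝ) - (1 - w) * a⁻¹ = (a - 1 + w) * a⁻¹ := by field_simp; ring
  rw [h2, mul_inv, inv_inv, div_eq_mul_inv,
    show w ^ (s-1) * a⁻¹ * ((a - 1 + w)⁻¹ * a) = w ^ (s-1) * (a - 1 + w)⁻¹ * (a⁻¹ * a) from by
      ring, inv_mul_cancel₀ ha', mul_one]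

lemma cov {q s t : ℝ} (hq : 1 < q) (hs : 0 < s) (ht : 0 < t) :
    ∫ x in Ioi (0:ℝ), (q ^ (x + t) - 1) ^ (-s)
      = (q ^ t - 1) ^ (1 - s) / Real.log q
          * ∫ w in Ioo (0:ℝ) 1, w ^ (s - 1) / (q ^ t - 1 + w) := by
  have hq0 : (0:ℝ) < q := by linarith
  have hL : 0 < Real.log q := Real.log_pos hq
  set L := Real.log q with hLdef
  set a := q ^ t with hadef
  have ha1 : 1 < a := by
    rw [hadef, show (1:ℝ) = q ^ (0:ℝ) by simp]
    exact Real.rpow_lt_rpow_left_iff hq |>.2 ht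
  have ha0 : 0 < a - 1 := by linarith
  set φ : ℝ → ℝ := fun w => (Real.log (a - 1 + w) - Real.log w) / L - t with hφ
  set φ' : ℝ → ℝ := fun w => (1 / (a - 1 + w) - 1 / w) / L with hφ'
  have hpos1 : ∀ w ∈ Ioo (0:ℝ) 1, 0 < a - 1 + w := fun w hw => by
    have := hw.1; linarith
  -- key : q ^ (φ w + t) = (a-1+w)/w
  have key : ∀ w ∈ Ioo (0:ℝ) 1, q ^ (φ w + t) = (a - 1 + w) / w := by
    intro w hw
    have hw0 := hw.1
    have h1 := hpos1 w hw
    rw [Real.rpow_def_of_pos hq0, hφ]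
    simp only
    rw [show L * ((Real.log (a - 1 + w) - Real.log w) / L - t + t)
        = Real.log (a - 1 + w) - Real.log w from by field_simp; ring,
      Real.exp_sub, Real.exp_log h1, Real.exp_log hw0]
  -- derivative
  have hder : ∀ w ∈ Ioo (0:ℝ) 1, HasDerivWithinAt φ (φ' w) (Ioo (0:ℝ) 1) w := by
    intro w hw
    have h1 : HasDerivAt (fun w : ℝ => Real.log (a - 1 + w)) (1 / (a - 1 + w)) w := by
      have := ((hasDerivAt_id w).const_add (a - 1)).log (ne_of_gt (hpos1 w hw))
      simpa using this
    have h2 : HasDerivAt Real.log w⁻¹ w := Real.hasDerivAt_log (ne_of_gt hw.1)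
    have := (((h1.sub h2).div_const L).sub_const t)
    rw [hφ, hφ']
    simp only [one_div w]
    exact this.hasDerivWithinAt
  -- injectivity
  have hinj : InjOn φ (Ioo (0:ℝ) 1) := by
    intro w1 h1 w2 h2 heq
    have e1 := key w1 h1
    have e2 := key w2 h2
    rw [heq] at e1
    have : (a - 1 + w1) / w1 = (a - 1 + w2) / w2 := by rw [← e1, ← e2]
    have hw1 := h1.1
    have hw2 := h2.1
    field_simp at this
    nlinarith [this]
  -- image
  have himg : φ '' Ioo (0:ℝ) 1 = Ioi (0:ℝ) := by
    ext x
    constructor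
    · rintro ⟨w, hw, rfl⟩
      have hw0 := hw.1
      have hw1 := hw.2
      have h1 := hpos1 w hw
      have hgt : a < (a - 1 + w) / w := by
        rw [lt_div_iff₀ hw0]
        nlinarith
      have : Real.log a < Real.log ((a - 1 + w) / w) := Real.log_lt_log (by linarith) hgt
      rw [Real.log_div (ne_of_gt h1) (ne_of_gt hw0)] at this
      rw [hadef, Real.log_rpow hq0] at this
      simp only [hφ, mem_Ioi]
      rw [sub_pos, lt_div_iff₀ hL]
      linarith
    · intro hx
      have hx0 : (0:ℝ) < x := hx
      set u := q ^ (x + t) with hu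
      have hua : a < u := by
        rw [hadef, hu]
        exact Real.rpow_lt_rpow_left_iff hq |>.2 (by linarith)
      have hu1 : 1 < u := by linarith
      refine ⟨(a - 1) / (u - 1), ⟨div_pos ha0 (by linarith), ?_⟩, ?_⟩
      · rw [div_lt_one (by linarith)]; linarith
      · have hne : u - 1 ≠ 0 := ne_of_gt (by linarith)
        have hw0 : (0:ℝ) < (a - 1) / (u - 1) := div_pos ha0 (by linarith)
        have hkey : a - 1 + (a - 1) / (u - 1) = (a - 1) * u / (u - 1) := by
          field_simp; ring
        rw [hφ]
        simp only
        rw [hkey, Real.log_div (ne_of_gt (mul_pos ha0 (by linarith))) hne,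
          Real.log_div (ne_of_gt ha0) hne,
          Real.log_mul (ne_of_gt ha0) (by positivity)]
        rw [hu, Real.log_rpow hq0]
        field_simp
        rw [hLdef]; ring
  -- main rewrite
  rw [← himg, integral_image_eq_integral_abs_deriv_smul measurableSet_Ioo hder hinj]
  rw [show ∀ r c : ℝ, r / c = r * c⁻¹ from fun r c => div_eq_mul_inv r c]
  have hcongr : ∀ w ∈ Ioo (0:ℝ) 1,
      |φ' w| • (q ^ (φ w + t) - 1) ^ (-s)
        = ((a - 1) ^ (1 - s) * L⁻¹) * (w ^ (s - 1) / (a - 1 + w)) := by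
    intro w hw
    have hw0 := hw.1
    have h1 := hpos1 w hw
    have e1 : q ^ (φ w + t) - 1 = (a - 1) / w := by
      rw [key w hw]; field_simp; ring
    have e2 : ((a - 1) / w) ^ (-s) = (a - 1) ^ (-s) * w ^ s := by
      rw [Real.div_rpow ha0.le hw0.le, Real.rpow_neg hw0.le, div_eq_mul_inv, inv_inv]
    have hneg : φ' w < 0 := by
      rw [hφ']
      simp only
      apply div_neg_of_neg_of_pos _ hL
      rw [sub_neg]
      exact one_div_lt_one_div_of_lt hw0 (by linarith)
    have e0 : 1 / w - 1 / (a - 1 + w) = (a - 1) / (w * (a - 1 + w)) := by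
      rw [div_sub_div _ _ (ne_of_gt hw0) (ne_of_gt h1)]
      congr 1
      ring
    have e3 : |φ' w| = (a - 1) / (w * (a - 1 + w)) * L⁻¹ := by
      rw [abs_of_neg hneg, hφ']
      simp only
      rw [← neg_div, neg_sub, e0, div_eq_mul_inv]
    rw [smul_eq_mul, e1, e2, e3]
    rw [show (a-1) ^ (1-s) = (a-1) * (a-1) ^ (-s) from by
      rw [show (1:ℝ) - s = 1 + (-s) from by ring, Real.rpow_add ha0, Real.rpow_one]]
    rw [show w ^ (s-1) = w ^ s / w from by
      rw [Real.rpow_sub hw0, Real.rpow_one]]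
    have hL' : L ≠ 0 := ne_of_gt hL
    field_simp
  rw [setIntegral_congr_fun measurableSet_Ioo hcongr, MeasureTheory.integral_const_mul]

lemma F_integrableOn {q s t : ℝ} (hq : 1 < q) (hs : 0 < s) (ht : 0 < t) :
    IntegrableOn (fun x : ℝ => (q ^ (x + t) - 1) ^ (-s)) (Ioi (0:ℝ)) := by
  have hq0 : (0:ℝ) < q := by linarith
  have hL : 0 < Real.log q := Real.log_pos hq
  have hbase : ∀ x : ℝ, 0 ≤ x → 1 < q ^ (x + t) := by
    intro x hx
    rw [show (1:ℝ) = q ^ (0:ℝ) by simp]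
    exact Real.rpow_lt_rpow_left_iff hq |>.2 (by linarith)
  have hat : 0 < q ^ t - 1 := by
    have := hbase 0 le_rfl; simp only [zero_add] at this; linarith
  have hcont : Continuous fun x : ℝ => q ^ (x + t) := by
    have : (fun x : ℝ => q ^ (x + t)) = fun x => Real.exp (Real.log q * (x + t)) := by
      funext x; rw [Real.rpow_def_of_pos hq0]
    rw [this]
    exact Real.continuous_exp.comp (by continuity)
  constructor
  · apply ContinuousOn.aestronglyMeasurable _ measurableSet_Ioi
    apply ContinuousOn.rpow_const ((hcont.continuousOn).sub continuousOn_const)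
    intro x hx
    exact Or.inl (ne_of_gt (by simp only [Pi.sub_apply]; linarith [hbase x (le_of_lt hx)]))
  · apply HasFiniteIntegral.mono' (g := fun x => (q ^ t - 1) ^ (-s) * Real.exp (-(s * Real.log q) * x))
    · exact ((exp_neg_integrableOn_Ioi 0 (by positivity)).const_mul _).hasFiniteIntegral
    · filter_upwards [ae_restrict_mem measurableSet_Ioi] with x hx
      have hx0 : (0:ℝ) < x := hx
      have h1 : 1 < q ^ (x + t) := hbase x hx0.le
      have hqx : 1 ≤ q ^ x := by
        rw [show (1:ℝ) = q ^ (0:ℝ) by simp]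
        exact Real.rpow_le_rpow_left_iff hq |>.2 hx0.le
      have hsplit : q ^ (x + t) = q ^ x * q ^ t := Real.rpow_add hq0 x t
      have hge : q ^ x * (q ^ t - 1) ≤ q ^ (x + t) - 1 := by
        rw [hsplit]; nlinarith
      have hpos : 0 < q ^ x * (q ^ t - 1) := by positivity
      rw [Real.norm_eq_abs, abs_of_nonneg (Real.rpow_nonneg (by linarith) _)]
      calc (q ^ (x + t) - 1) ^ (-s) ≤ (q ^ x * (q ^ t - 1)) ^ (-s) :=
            Real.rpow_le_rpow_of_nonpos hpos hge (by linarith)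
        _ = (q ^ t - 1) ^ (-s) * Real.exp (-(s * Real.log q) * x) := by
            rw [Real.mul_rpow (by positivity) (by linarith), mul_comm]
            congr 1
            rw [← Real.rpow_mul hq0.le, Real.rpow_def_of_pos hq0]
            congr 1
            ring

lemma union_Ioc : (⋃ n : ℕ, Ioc (n:ℝ) ((n:ℝ)+1)) = Ioi (0:ℝ) := by
  ext x
  simp only [mem_iUnion, mem_Ioc, mem_Ioi]
  constructor
  · rintro ⟨n, h1, _⟩
    have : (0:ℝ) ≤ n := Nat.cast_nonneg n
    linarith
  · intro hx
    refine ⟨⌈x⌉₊ - 1, ?_, ?_⟩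
    · have h1 : 1 ≤ ⌈x⌉₊ := Nat.one_le_ceil_iff.2 hx
      have h2 : (⌈x⌉₊ : ℝ) < x + 1 := Nat.ceil_lt_add_one hx.le
      rw [Nat.cast_sub h1]
      push_cast
      linarith
    · have h1 : 1 ≤ ⌈x⌉₊ := Nat.one_le_ceil_iff.2 hx
      have h2 : x ≤ (⌈x⌉₊ : ℝ) := Nat.le_ceil x
      rw [Nat.cast_sub h1]
      push_cast
      linarith

lemma disj_Ioc : Pairwise (Function.onFun Disjoint fun n : ℕ => Ioc (n:ℝ) ((n:ℝ)+1)) := by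
  intro m n hmn
  simp only [Function.onFun]
  rw [Set.Ioc_disjoint_Ioc]
  rcases lt_or_gt_of_ne hmn with h | h
  · have h' : (m:ℝ) + 1 ≤ (n:ℝ) := by exact_mod_cast Nat.succ_le_of_lt h
    exact le_trans (min_le_left _ _) (le_trans h' (le_max_right _ _))
  · have h' : (n:ℝ) + 1 ≤ (m:ℝ) := by exact_mod_cast Nat.succ_le_of_lt h
    exact le_trans (min_le_right _ _) (le_trans h' (le_max_left _ _))

lemma sum_int {q s t : ℝ} (hq : 1 < q) (hs : 0 < s) (ht : 0 < t) :
    ∑' n : ℕ, ∫ x in (0:ℝ)..1, (q ^ ((n : ℝ) + x + t) - 1) ^ (-s)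
      = ∫ x in Ioi (0:ℝ), (q ^ (x + t) - 1) ^ (-s) := by
  have hint := F_integrableOn hq hs ht
  rw [← union_Ioc] at hint
  have step : ∀ n : ℕ, ∫ x in (0:ℝ)..1, (q ^ ((n : ℝ) + x + t) - 1) ^ (-s)
      = ∫ x in Ioc (n:ℝ) ((n:ℝ)+1), (q ^ (x + t) - 1) ^ (-s) := by
    intro n
    rw [show (fun x => (q ^ ((n:ℝ) + x + t) - 1) ^ (-s))
        = fun x => (fun y => (q ^ (y + t) - 1) ^ (-s)) ((n:ℝ) + x) from rfl]
    rw [intervalIntegral.integral_comp_add_left (fun y => (q ^ (y + t) - 1) ^ (-s)) (n:ℝ)]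
    rw [add_zero, intervalIntegral.integral_of_le (by linarith)]
  simp_rw [step]
  rw [← MeasureTheory.integral_iUnion (fun n => measurableSet_Ioc) disj_Ioc hint, union_Ioc]

lemma part1 {q s t : ℝ} (hq : 1 < q) (hs : 0 < s) (ht : 0 < t) :
    ∑' n : ℕ, ∫ x in (0:ℝ)..1, (q ^ ((n : ℝ) + x + t) - 1) ^ (-s)
      = (q ^ t - 1) ^ (1 - s) / (s * q ^ t * Real.log q) * F211 (s + 1) (q ^ (-t)) := by
  have hq0 : (0:ℝ) < q := by linarith
  have hL : 0 < Real.log q := Real.log_pos hq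
  have ha1 : 1 < q ^ t := by
    rw [show (1:ℝ) = q ^ (0:ℝ) by simp]
    exact Real.rpow_lt_rpow_left_iff hq |>.2 ht
  set a := q ^ t with hadef
  have hz : q ^ (-t) = a⁻¹ := by rw [hadef, ← Real.rpow_neg hq0.le]
  rw [sum_int hq hs ht, cov hq hs ht, expand_int ha1 hs]
  have hterm : ∀ k : ℕ, (Nat.factorial k : ℝ) / poch s (k + 1) * a⁻¹ ^ (k + 1)
      = (s * a)⁻¹ * ((Nat.factorial k : ℝ) / poch (s + 1) k * a⁻¹ ^ k) := by
    intro k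
    rw [poch_succ', pow_succ]
    simp only [div_eq_mul_inv, mul_inv]
    ring
  rw [tsum_congr hterm, tsum_mul_left, F211, hz]
  simp only [div_eq_mul_inv, mul_inv]
  ring

lemma part2 {q s t : ℝ} (hq : 1 < q) (hs : 0 < s) (ht : 0 < t) :
    (∫ x in (0:ℝ)..1, ∑' n : ℕ, (qAnalog q ((n : ℝ) + x + t)) ^ (-s))
      = (q - 1) ^ s * ∑' n : ℕ, ∫ x in (0:ℝ)..1, (q ^ ((n : ℝ) + x + t) - 1) ^ (-s) := by
  have hq0 : (0:ℝ) < q := by linarith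
  have hq1 : (0:ℝ) < q - 1 := by linarith
  have hL : 0 < Real.log q := Real.log_pos hq
  have hbase : ∀ y : ℝ, 0 < y → 1 < q ^ y := by
    intro y hy
    rw [show (1:ℝ) = q ^ (0:ℝ) by simp]
    exact Real.rpow_lt_rpow_left_iff hq |>.2 hy
  have hat : 0 < q ^ t - 1 := by linarith [hbase t ht]
  set g : ℕ → ℝ → ℝ := fun n x => (q ^ ((n : ℝ) + x + t) - 1) ^ (-s) with hg
  -- continuity of each g n
  have hgcont : ∀ n : ℕ, ContinuousOn (g n) (Ioo (0:ℝ) 1) := by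
    intro n
    have hc : Continuous fun x : ℝ => q ^ ((n:ℝ) + x + t) := by
      have : (fun x : ℝ => q ^ ((n:ℝ) + x + t))
          = fun x => Real.exp (Real.log q * ((n:ℝ) + x + t)) := by
        funext x; rw [Real.rpow_def_of_pos hq0]
      rw [this]; exact Real.continuous_exp.comp (by continuity)
    apply ContinuousOn.rpow_const ((hc.continuousOn).sub continuousOn_const)
    intro x hx
    have : 0 < (n:ℝ) + x + t := by
      have : (0:ℝ) ≤ n := Nat.cast_nonneg n
      have := hx.1; linarith [Nat.cast_nonneg (α := ℝ) n]
    exact Or.inl (ne_of_gt (by simp only [Pi.sub_apply]; linarith [hbase _ this]))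
  -- uniform bound on Ioo 0 1
  set r := q ^ (-s) with hr
  have hr0 : 0 < r := Real.rpow_pos_of_pos hq0 _
  have hr1 : r < 1 := Real.rpow_lt_one_of_one_lt_of_neg hq (by linarith)
  set C := (q ^ t - 1) ^ (-s) with hC
  have hC0 : 0 < C := Real.rpow_pos_of_pos hat _
  have hbound : ∀ n : ℕ, ∀ x ∈ Ioo (0:ℝ) 1, ‖g n x‖ ≤ C * r ^ n := by
    intro n x hx
    have hx0 := hx.1
    have hn0 : (0:ℝ) ≤ n := Nat.cast_nonneg n
    have hqn : 1 ≤ q ^ (n:ℝ) := by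
      rw [show (1:ℝ) = q ^ (0:ℝ) by simp]
      exact Real.rpow_le_rpow_left_iff hq |>.2 hn0
    have h1 : q ^ ((n:ℝ) + t) ≤ q ^ ((n:ℝ) + x + t) :=
      Real.rpow_le_rpow_left_iff hq |>.2 (by linarith)
    have hsplit : q ^ ((n:ℝ) + t) = q ^ (n:ℝ) * q ^ t := Real.rpow_add hq0 _ _
    have hge : q ^ (n:ℝ) * (q ^ t - 1) ≤ q ^ ((n:ℝ) + x + t) - 1 := by
      nlinarith
    have hpos : 0 < q ^ (n:ℝ) * (q ^ t - 1) := by positivity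
    rw [hg]
    simp only
    rw [Real.norm_eq_abs, abs_of_nonneg (Real.rpow_nonneg (by linarith) _)]
    calc (q ^ ((n:ℝ) + x + t) - 1) ^ (-s)
        ≤ (q ^ (n:ℝ) * (q ^ t - 1)) ^ (-s) :=
          Real.rpow_le_rpow_of_nonpos hpos hge (by linarith)
      _ = C * r ^ n := by
          rw [Real.mul_rpow (by positivity) hat.le, mul_comm, hC, hr]
          congr 1
          rw [← Real.rpow_natCast (q ^ (-s)) n, ← Real.rpow_mul hq0.le,
            ← Real.rpow_mul hq0.le]
          congr 1
          ring
  -- integrability of each g n on Ioo 0 1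
  have hgint : ∀ n : ℕ, IntegrableOn (g n) (Ioo (0:ℝ) 1) := by
    intro n
    apply Integrable.mono' (g := fun _ => C * r ^ n)
      (integrableOn_const measure_Ioo_lt_top.ne)
    · exact ContinuousOn.aestronglyMeasurable (hgcont n) measurableSet_Ioo
    · filter_upwards [ae_restrict_mem measurableSet_Ioo] with x hx
      exact hbound n x hx
  have hvol : (volume (Ioo (0:ℝ) 1)).toReal = 1 := by simp
  have hnormint : ∀ n : ℕ, ∫ x in Ioo (0:ℝ) 1, ‖g n x‖ ≤ C * r ^ n := by
    intro n
    calc ∫ x in Ioo (0:ℝ) 1, ‖g n x‖ ≤ ∫ _ in Ioo (0:ℝ) 1, C * r ^ n := by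
          apply integral_mono_ae (hgint n).norm
            (integrableOn_const measure_Ioo_lt_top.ne)
          filter_upwards [ae_restrict_mem measurableSet_Ioo] with x hx
          exact hbound n x hx
      _ = C * r ^ n := by rw [setIntegral_const, measureReal_def, hvol, one_smul]
  have hsumnorm : Summable fun n => ∫ x in Ioo (0:ℝ) 1, ‖g n x‖ :=
    Summable.of_nonneg_of_le (fun n => integral_nonneg fun x => norm_nonneg _)
      hnormint ((summable_geometric_of_lt_one hr0.le hr1).mul_left C)
  -- rewrite both sides into Ioo-set integrals
  have conv : ∀ h : ℝ → ℝ, (∫ x in (0:ℝ)..1, h x) = ∫ x in Ioo (0:ℝ) 1, h x := by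
    intro h
    rw [intervalIntegral.integral_of_le zero_le_one, integral_Ioc_eq_integral_Ioo]
  rw [conv]
  simp_rw [conv]
  -- pointwise: qAnalog sum = (q-1)^s * sum of g
  have hpt : ∀ x ∈ Ioo (0:ℝ) 1,
      (∑' n : ℕ, (qAnalog q ((n : ℝ) + x + t)) ^ (-s))
        = (q - 1) ^ s * ∑' n : ℕ, g n x := by
    intro x hx
    rw [← tsum_mul_left]
    apply tsum_congr
    intro n
    have hx0 := hx.1
    have hy : 0 < (n:ℝ) + x + t := by linarith [Nat.cast_nonneg (α := ℝ) n]
    have hb : 0 < q ^ ((n:ℝ) + x + t) - 1 := by linarith [hbase _ hy]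
    rw [qAnalog, Real.div_rpow hb.le hq1.le, Real.rpow_neg hq1.le, div_eq_mul_inv, inv_inv]
    exact mul_comm _ _
  rw [setIntegral_congr_fun measurableSet_Ioo hpt, MeasureTheory.integral_const_mul,
    integral_tsum_of_summable_integral_norm hgint hsumnorm]

/-- For `q > 1`, `s > 0`, `t > 0`:
`∑_{n=0}^∞ ∫₀¹ (q^{n+x+t}-1)^{-s} dx = (q^t-1)^{1-s}/(s q^t log q) ⋅ ₂F₁(1,1;s+1;q^{-t})`;
equivalently `∫₀¹ ζ_q(s, x+t) dx = ((q-1)^s/(s log q)) (q^t-1)^{1-s} q^{-t} ₂F₁(1,1;s+1;q^{-t})`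
where `ζ_q(s,x) = ∑_{n=0}^∞ [n+x]_q^{-s}`. -/
theorem integral_q_hurwitz_zeta (q s t : ℝ) (hq : 1 < q) (hs : 0 < s) (ht : 0 < t) :
    (∑' n : ℕ, ∫ x in (0 : ℝ)..1, (q ^ ((n : ℝ) + x + t) - 1) ^ (-s))
        = (q ^ t - 1) ^ (1 - s) / (s * q ^ t * Real.log q) * F211 (s + 1) (q ^ (-t)) ∧
      (∫ x in (0 : ℝ)..1, ∑' n : ℕ, (qAnalog q ((n : ℝ) + x + t)) ^ (-s))
        = (q - 1) ^ s / (s * Real.log q) * ((q ^ t - 1) ^ (1 - s) / q ^ t)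
            * F211 (s + 1) (q ^ (-t)) := by
  constructor
  · exact part1 hq hs ht
  · rw [part2 hq hs ht, part1 hq hs ht]
    simp only [div_eq_mul_inv, mul_inv]
    ring
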